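/- Let N ≥ 1 and set A₁ := (1/(N+1))·diag(−N, 1, …, 1) ∈ M_{N+1}(ℂ). Let Γ₁ : ℝ → M_{N+1}(ℂ) be differentiable with block decomposition Γ₁(s) = [[−δ(s), p(s)ᵀ],[q(s), Δ(s)]] (δ scalar, p, q ∈ ℂ^N, Δ an N×N matrix), and let Γ₂ : ℝ → M_{N+1}(ℂ) be any function. If for all s ∈ ℝ one has ∂_s Γ₁(s) + [Γ₂(s), A₁] − [Γ₁(s), A₁]·Γ₁(s) = 0 (where [X,Y] := XY − YX), then δ'(s) = −p(s)ᵀq(s) for all s ∈ ℝ. -/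
import Mathlib


open Matrix BigOperators

namespace PearceyDelta

/-- `A₁ = (1/(N+1)) diag(−N, 1, …, 1)` in `(1,N)`-block form. -/
noncomputable def A1 (N : ℕ) : Matrix (Fin 1 ⊕ Fin N) (Fin 1 ⊕ Fin N) ℂ :=
  (((N : ℂ) + 1)⁻¹) • Matrix.fromBlocks ((-(N : ℂ)) • 1) 0 0 1

lemma A1_diag (N : ℕ) : A1 N = Matrix.diagonal
    (Sum.elim (fun _ : Fin 1 => -(N:ℂ) * ((N:ℂ)+1)⁻¹) (fun _ : Fin N => ((N:ℂ)+1)⁻¹)) := by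
  ext i j
  rcases i with i | i <;> rcases j with j | j
  · simp [A1, Matrix.diagonal, Matrix.one_apply, mul_comm, Subsingleton.elim i j]
  · simp [A1, Matrix.diagonal]
  · simp [A1, Matrix.diagonal]
  · by_cases h : i = j <;> simp [A1, Matrix.diagonal, Matrix.one_apply, h, mul_comm]

/-- if `Γ₁(s) = [[−δ(s), p(s)ᵀ],[q(s), Δ(s)]]` is differentiable and
`∂ₛΓ₁ + [Γ₂, A₁] − [Γ₁, A₁]Γ₁ = 0` for all `s`, then `δ'(s) = −p(s)ᵀq(s)`. -/
theorem deriv_delta_eq_neg_pTq (N : ℕ) (hN : 1 ≤ N)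
    (δ : ℝ → ℂ) (p q : ℝ → Fin N → ℂ) (Δ : ℝ → Fin N → Fin N → ℂ)
    (hδ : Differentiable ℝ δ) (hp : Differentiable ℝ p) (hq : Differentiable ℝ q)
    (hΔ : Differentiable ℝ Δ)
    (Γ₁ : ℝ → Matrix (Fin 1 ⊕ Fin N) (Fin 1 ⊕ Fin N) ℂ)
    (hΓ₁ : ∀ s, Γ₁ s = Matrix.fromBlocks
      (Matrix.of fun _ _ => -δ s)
      (Matrix.of fun _ j => p s j)
      (Matrix.of fun i _ => q s i)
      (Matrix.of (Δ s)))
    (Γ₂ : ℝ → Matrix (Fin 1 ⊕ Fin N) (Fin 1 ⊕ Fin N) ℂ)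
    (heq : ∀ s : ℝ,
      (Matrix.of fun i j => deriv (fun u : ℝ => Γ₁ u i j) s)
        + (Γ₂ s * A1 N - A1 N * Γ₂ s)
        - (Γ₁ s * A1 N - A1 N * Γ₁ s) * Γ₁ s = 0) :
    ∀ s : ℝ, deriv δ s = -∑ i, p s i * q s i := by
  intro s
  have h := congrFun (congrFun (heq s) (Sum.inl 0)) (Sum.inl 0)
  have hfun : (fun u : ℝ => Γ₁ u (Sum.inl 0) (Sum.inl 0)) = fun u => -δ u := by
    funext u; rw [hΓ₁]; rfl
  have hc : ((N:ℂ)+1)⁻¹ + (N:ℂ) * ((N:ℂ)+1)⁻¹ = 1 := by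
    have hne : ((N:ℂ)+1) ≠ 0 := by
      have h1 : (((N+1 : ℕ)) : ℂ) ≠ 0 := Nat.cast_ne_zero.mpr (Nat.succ_ne_zero N)
      push_cast at h1; exact h1
    field_simp
    ring
  -- the Γ₂ commutator vanishes on the diagonal
  have hG2 : (Γ₂ s * A1 N - A1 N * Γ₂ s) (Sum.inl 0) (Sum.inl 0) = 0 := by
    rw [A1_diag]
    simp [Matrix.mul_diagonal, Matrix.diagonal_mul, mul_comm]
  -- entries of the Γ₁ commutator on the first row
  have hC : ∀ k, (Γ₁ s * A1 N - A1 N * Γ₁ s) (Sum.inl 0) k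
      = Sum.elim (fun _ : Fin 1 => (0:ℂ)) (fun j => p s j) k := by
    intro k
    rw [A1_diag, hΓ₁]
    rcases k with k | k
    · simp [Matrix.mul_diagonal, Matrix.diagonal_mul, mul_comm]
    · simp only [Matrix.sub_apply, Matrix.mul_diagonal, Matrix.diagonal_mul,
        Sum.elim_inl, Sum.elim_inr, Matrix.fromBlocks_apply₁₂, Matrix.of_apply]
      linear_combination (p s k) * hc
  have h3 : ((Γ₁ s * A1 N - A1 N * Γ₁ s) * Γ₁ s) (Sum.inl 0) (Sum.inl 0)
      = ∑ j, p s j * q s j := by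
    rw [Matrix.mul_apply, Fintype.sum_sum_type]
    simp only [hC, Sum.elim_inl, Sum.elim_inr, zero_mul, Finset.sum_const_zero, zero_add]
    rw [hΓ₁]
    simp [Matrix.fromBlocks_apply₂₁]
  simp only [Matrix.add_apply, Matrix.sub_apply, Matrix.of_apply, Matrix.zero_apply,
    hfun, hG2, h3] at h
  have hderiv : deriv (fun u => -δ u) s = -deriv δ s := by
    simpa using (hδ s).hasDerivAt.neg.deriv
  rw [hderiv] at h
  linear_combination -h
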